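/- Let κ be a regular uncountable cardinal which is not a strong limit. Let θ be the least cardinal ν such that there exists λ with ν ≤ λ < κ ≤ λ^ν. Then θ is a regular cardinal. -/

import Mathlib

open Cardinal


theorem stmt_7 (κ θ : Cardinal)
    (hreg : κ.IsRegular) (hunc : Cardinal.aleph0 < κ) (hnsl : ¬ κ.IsStrongLimit)
    (hθ : θ = sInf {ν : Cardinal | ∃ l : Cardinal, ν ≤ l ∧ l < κ ∧ κ ≤ l ^ ν}) :
    θ.IsRegular := by
  set S : Set Cardinal := {ν : Cardinal | ∃ l : Cardinal, ν ≤ l ∧ l < κ ∧ κ ≤ l ^ ν} with hS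
  -- S is nonempty
  have hSne : S.Nonempty := by
    rw [Cardinal.isStrongLimit_iff, Cardinal.IsStrongPrelimit] at hnsl
    push_neg at hnsl
    obtain ⟨x, hxκ, hx2⟩ := hnsl hreg.pos.ne'
    refine ⟨max x ℵ₀, max x ℵ₀, le_rfl, max_lt hxκ hunc, ?_⟩
    calc κ ≤ 2 ^ x := hx2
      _ ≤ 2 ^ max x ℵ₀ := Cardinal.power_le_power_left two_ne_zero (le_max_left _ _)
      _ ≤ (max x ℵ₀) ^ max x ℵ₀ := by
          apply Cardinal.power_le_power_right
          exact (Cardinal.nat_lt_aleph0 2).le.trans (le_max_right _ _)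
  have hθS : θ ∈ S := hθ ▸ csInf_mem hSne
  obtain ⟨l, hθl, hlκ, hκl⟩ := hθS
  -- θ is infinite
  have hθinf : ℵ₀ ≤ θ := by
    by_contra h
    push_neg at h
    rcases le_or_gt ℵ₀ l with hl | hl
    · exact absurd (hκl.trans (Cardinal.pow_le hl h)) hlκ.not_ge
    · exact absurd (hκl.trans_lt (Cardinal.power_lt_aleph0 hl h)) hunc.not_gt
  refine ⟨hθinf, ?_⟩
  by_contra hcof
  push_neg at hcof
  set μ := θ.ord.cof with hμ
  have hμθ : μ < θ := hcof
  have hθκ : θ < κ := lt_of_le_of_lt hθl hlκ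
  -- obtain a cofinal family
  obtain ⟨ι, f, hlsub, hmk⟩ := Ordinal.exists_lsub_cof θ.ord
  set g : ι → Cardinal := fun i => (f i).card + 1 with hg
  have hgθ : ∀ i, g i < θ := by
    intro i
    have : f i < θ.ord := hlsub ▸ Ordinal.lt_lsub f i
    exact Cardinal.add_lt_of_lt hθinf (Cardinal.lt_ord.mp this)
      (lt_of_lt_of_le Cardinal.one_lt_aleph0 hθinf)
  -- θ ≤ sum g
  have hθsum : θ ≤ Cardinal.sum g := by
    have h1 : θ = (Ordinal.lsub f).card := by rw [hlsub, Cardinal.card_ord]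
    have h2 : Ordinal.lsub f = ⨆ i, Order.succ (f i) := rfl
    rw [h1, h2]
    calc (⨆ i, Order.succ (f i)).card ≤ Cardinal.sum fun i => (Order.succ (f i)).card :=
          Ordinal.card_iSup_le_sum_card _
      _ = Cardinal.sum g := by simp [hg, Ordinal.card_succ]
  -- each l ^ g i < κ by minimality of θ
  have hlg : ∀ i, l ^ g i < κ := by
    intro i
    by_contra hcon
    push_neg at hcon
    have : g i ∈ S := ⟨l, (hgθ i).le.trans hθl, hlκ, hcon⟩
    exact absurd (hθ ▸ csInf_le' this) (hgθ i).not_ge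
  set σ : Cardinal := ⨆ i, l ^ g i with hσ
  have hσκ : σ < κ := by
    apply Ordinal.iSup_lt _ hlg
    rw [hmk]
    exact lt_of_lt_of_le (hμθ.trans hθκ) hreg.2
  -- κ ≤ σ ^ μ
  have hκσ : κ ≤ σ ^ μ := by
    calc κ ≤ l ^ θ := hκl
      _ ≤ l ^ Cardinal.sum g := by
          rcases eq_or_ne l 0 with rfl | hl0
          · rw [Cardinal.zero_power (aleph0_pos.trans_le hθinf).ne'] at hκl
            exact absurd hκl hreg.pos.not_ge
          · exact Cardinal.power_le_power_left hl0 hθsum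
      _ = Cardinal.prod fun i => l ^ g i := Cardinal.power_sum l g
      _ ≤ Cardinal.prod fun _ : ι => σ :=
          Cardinal.prod_le_prod _ _ fun i => le_ciSup (Cardinal.bddAbove_range _) i
      _ = σ ^ #ι := Cardinal.prod_const' ι σ
      _ = σ ^ μ := by rw [hmk]
  -- hence μ ∈ S with witness max σ μ, contradicting μ < θ = sInf S
  have hmem : μ ∈ S := by
    refine ⟨max σ μ, le_max_right _ _, max_lt hσκ (hμθ.trans hθκ), ?_⟩
    exact hκσ.trans (Cardinal.power_le_power_right (le_max_left _ _))
  exact absurd (hθ ▸ csInf_le' hmem) hμθ.not_ge
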